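/- In the torus J = C³/Λ, the fixed locus of the antireflection ρ₂ : (z₁,z₂,z₃) ↦ (−z₁,−z₂,z₃) is the union of exactly 4 translates of the elliptic curve E = (V₁ + Λ)/Λ, where V₁ is the z₃-axis; representatives of the 4 translates are 0, (1,0,0), (α/2, α/2, 0), and (1+α/2, α/2, 0). -/
import Mathlib


noncomputable section

def Kalpha : ℂ := (1 + Complex.I * Real.sqrt 7) / 2
def Kalphabar : ℂ := (1 - Complex.I * Real.sqrt 7) / 2

def Ke1 : Fin 3 → ℂ := ![0, Kalpha, Kalpha]
def Ke2 : Fin 3 → ℂ := ![0, 0, 2]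
def Ke3 : Fin 3 → ℂ := ![1, 1, Kalphabar]

def LambdaZ : Submodule ℤ (Fin 3 → ℂ) :=
  Submodule.span ℤ {Ke1, Ke2, Ke3, Kalpha • Ke1, Kalpha • Ke2, Kalpha • Ke3}

/-- The four representatives `0, (1,0,0), (α/2,α/2,0), (1+α/2,α/2,0)`. -/
def kappas : Fin 4 → (Fin 3 → ℂ) :=
  ![![0,0,0], ![1,0,0], ![Kalpha/2, Kalpha/2, 0], ![1 + Kalpha/2, Kalpha/2, 0]]

/- ### Auxiliary machinery -/

lemma Kvec0 {α : Type*} (x0 x1 x2 x3 x4 x5 : α) : ![x0,x1,x2,x3,x4,x5] 0 = x0 := rfl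
lemma Kvec1 {α : Type*} (x0 x1 x2 x3 x4 x5 : α) : ![x0,x1,x2,x3,x4,x5] 1 = x1 := rfl
lemma Kvec2 {α : Type*} (x0 x1 x2 x3 x4 x5 : α) : ![x0,x1,x2,x3,x4,x5] 2 = x2 := rfl
lemma Kvec3 {α : Type*} (x0 x1 x2 x3 x4 x5 : α) : ![x0,x1,x2,x3,x4,x5] 3 = x3 := rfl
lemma Kvec4 {α : Type*} (x0 x1 x2 x3 x4 x5 : α) : ![x0,x1,x2,x3,x4,x5] 4 = x4 := rfl
lemma Kvec5 {α : Type*} (x0 x1 x2 x3 x4 x5 : α) : ![x0,x1,x2,x3,x4,x5] 5 = x5 := rfl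

lemma Kh7 : (Real.sqrt 7 : ℂ) * (Real.sqrt 7 : ℂ) = 7 := by
  norm_cast
  rw [Real.mul_self_sqrt (by norm_num : (0:ℝ) ≤ 7)]

lemma Khsq : Kalpha * Kalpha = Kalpha - 2 := by
  unfold Kalpha
  linear_combination (Complex.I^2/4) * Kh7 + (7/4 : ℂ) * Complex.I_sq

lemma Khbar : Kalphabar = 1 - Kalpha := by unfold Kalpha Kalphabar; ring

lemma Khprod : Kalpha * Kalphabar = 2 := by
  rw [Khbar]; linear_combination -Khsq

lemma Kindep2 (A B : ℤ) (h : (A:ℂ) + B * Kalpha = 0) : A = 0 ∧ B = 0 := by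
  have him := congrArg Complex.im h
  simp [Kalpha, Complex.add_im, Complex.add_re, Complex.mul_im, Complex.mul_re,
    Complex.div_im, Complex.div_re, Complex.normSq] at him
  subst him
  refine ⟨?_, rfl⟩
  have : (A:ℂ) = 0 := by simpa using h
  exact_mod_cast this

/-- The six generators as a `Fin 6`-indexed family. -/
def Kg : Fin 6 → (Fin 3 → ℂ) := ![Ke1, Ke2, Ke3, Kalpha • Ke1, Kalpha • Ke2, Kalpha • Ke3]

lemma mem_LambdaZ_iff (x : Fin 3 → ℂ) :
    x ∈ LambdaZ ↔ ∃ c : Fin 6 → ℤ, ∑ i, c i • Kg i = x := by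
  rw [show LambdaZ = Submodule.span ℤ (Set.range Kg) by
    unfold LambdaZ Kg
    congr 1
    simp only [Matrix.range_cons, Matrix.range_empty]
    ext y; simp; tauto]
  exact Submodule.mem_span_range_iff_exists_fun ℤ

/-- Construction of a point of `κᵢ + E` congruent to `z`. -/
lemma Kbuild (z : Fin 3 → ℂ) (n : Fin 6 → ℤ) (q3 q5 r3 r5 : ℤ)
    (h0 : ((n 2 : ℂ)) + (n 5 : ℂ) * Kalpha = -z 0 - z 0)
    (h1 : ((n 0 : ℂ)) * Kalpha + (n 2 : ℂ) + (n 3 : ℂ) * (Kalpha * Kalpha) + (n 5 : ℂ) * Kalpha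
        = -z 1 - z 1)
    (hA : 2 * n 1 + n 2 - 2 * n 3 + 2 * n 5 = 0)
    (hB : n 0 - n 2 + n 3 + 2 * n 4 = 0)
    (h3 : n 3 = 2 * q3 + r3) (h5 : n 5 = 2 * q5 + r5)
    (i : Fin 4) (hk : kappas i = ![(r3:ℂ) + (r5:ℂ) * Kalpha/2, (r5:ℂ) * Kalpha/2, 0]) :
    ∃ w : ℂ, z - (kappas i + w • ![0,0,1]) ∈ LambdaZ := by
  have hA' : 2*((n 1:ℤ):ℂ) + ((n 2:ℤ):ℂ) - 2*((n 3:ℤ):ℂ) + 2*((n 5:ℤ):ℂ) = 0 := by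
    exact_mod_cast hA
  have hB' : ((n 0:ℤ):ℂ) - ((n 2:ℤ):ℂ) + ((n 3:ℤ):ℂ) + 2*((n 4:ℤ):ℂ) = 0 := by
    exact_mod_cast hB
  have h3' : ((n 3:ℤ):ℂ) = 2*(q3:ℂ) + (r3:ℂ) := by exact_mod_cast h3
  have h5' : ((n 5:ℤ):ℂ) = 2*(q5:ℂ) + (r5:ℂ) := by exact_mod_cast h5
  refine ⟨z 2 - (((n 4 - (n 3 - n 1 - n 5) + q3 + r3 : ℤ) : ℂ) * Kalpha
      + ((n 1 + n 5 - n 3 - r3 : ℤ) : ℂ) * Kalphabar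
      + ((-(q3 + r3) : ℤ) : ℂ) * (Kalpha * Kalpha)
      + ((-(q5 + r5) : ℤ) : ℂ) * (Kalpha * Kalphabar)), ?_⟩
  rw [mem_LambdaZ_iff]
  refine ⟨![n 4 - (n 3 - n 1 - n 5) + q3 + r3, 0, n 1 + n 5 - n 3 - r3,
      -(q3 + r3), 0, -(q5 + r5)], ?_⟩
  rw [hk]
  funext j
  fin_cases j
  · simp [Fin.sum_univ_six, show Kg 0 = Ke1 from rfl, show Kg 1 = Ke2 from rfl,
      show Kg 2 = Ke3 from rfl, show Kg 3 = Kalpha • Ke1 from rfl,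
      show Kg 4 = Kalpha • Ke2 from rfl, show Kg 5 = Kalpha • Ke3 from rfl, Kvec3, Kvec4, Kvec5, Ke1, Ke2, Ke3]
    push_cast
    linear_combination (-1/2 : ℂ) * h0 + (1/2 : ℂ) * hA' + (Kalpha/2) * h5'
  · simp [Fin.sum_univ_six, show Kg 0 = Ke1 from rfl, show Kg 1 = Ke2 from rfl,
      show Kg 2 = Ke3 from rfl, show Kg 3 = Kalpha • Ke1 from rfl,
      show Kg 4 = Kalpha • Ke2 from rfl, show Kg 5 = Kalpha • Ke3 from rfl, Kvec3, Kvec4, Kvec5, Ke1, Ke2, Ke3]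
    push_cast
    linear_combination (-1/2 : ℂ) * h1 + ((1:ℂ)/2 + Kalpha/2) * hA' + (Kalpha/2) * hB'
      + (-1 : ℂ) * h3' + (Kalpha/2) * h5' + (((n 3:ℤ):ℂ)/2 - (q3:ℂ) - (r3:ℂ)) * Khsq
  · simp [Fin.sum_univ_six, show Kg 0 = Ke1 from rfl, show Kg 1 = Ke2 from rfl,
      show Kg 2 = Ke3 from rfl, show Kg 3 = Kalpha • Ke1 from rfl,
      show Kg 4 = Kalpha • Ke2 from rfl, show Kg 5 = Kalpha • Ke3 from rfl, Kvec3, Kvec4, Kvec5, Ke1, Ke2, Ke3]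

/-- The converse: any point of `κᵢ + E` (mod `Λ`) is fixed by `ρ₂` (mod `Λ`). -/
lemma Kconv (z : Fin 3 → ℂ) (m t : Fin 6 → ℤ) (κ0 κ1 : ℂ)
    (H0 : ((m 2:ℂ)) + (m 5:ℂ) * Kalpha = z 0 - κ0)
    (H1 : ((m 0:ℂ)) * Kalpha + (m 2:ℂ) + (m 3:ℂ) * (Kalpha * Kalpha) + (m 5:ℂ) * Kalpha
        = z 1 - κ1)
    (e0 : ((t 2:ℂ)) + (t 5:ℂ) * Kalpha + 2 * κ0 = 0)
    (e1 : ((t 0:ℂ)) * Kalpha + (t 2:ℂ) + (t 3:ℂ) * (Kalpha * Kalpha) + (t 5:ℂ) * Kalpha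
        + 2 * κ1 = 0)
    (e2 : ((t 0:ℂ)) * Kalpha + 2 * (t 1:ℂ) + (t 2:ℂ) * Kalphabar
        + (t 3:ℂ) * (Kalpha * Kalpha) + 2 * (t 4:ℂ) * Kalpha
        + (t 5:ℂ) * (Kalpha * Kalphabar) = 0) :
    ![-z 0, -z 1, z 2] - z ∈ LambdaZ := by
  rw [mem_LambdaZ_iff]
  refine ⟨![-2 * m 0 + t 0, m 2 - 2 * m 3 + 2 * m 5 + t 1, -2 * m 2 + t 2,
      -2 * m 3 + t 3, m 0 - m 2 + m 3 + t 4, -2 * m 5 + t 5], ?_⟩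
  funext j
  fin_cases j
  · simp [Fin.sum_univ_six, show Kg 0 = Ke1 from rfl, show Kg 1 = Ke2 from rfl,
      show Kg 2 = Ke3 from rfl, show Kg 3 = Kalpha • Ke1 from rfl,
      show Kg 4 = Kalpha • Ke2 from rfl, show Kg 5 = Kalpha • Ke3 from rfl, Kvec3, Kvec4, Kvec5, Ke1, Ke2, Ke3]
    push_cast
    linear_combination (-2 : ℂ) * H0 + e0
  · simp [Fin.sum_univ_six, show Kg 0 = Ke1 from rfl, show Kg 1 = Ke2 from rfl,
      show Kg 2 = Ke3 from rfl, show Kg 3 = Kalpha • Ke1 from rfl,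
      show Kg 4 = Kalpha • Ke2 from rfl, show Kg 5 = Kalpha • Ke3 from rfl, Kvec3, Kvec4, Kvec5, Ke1, Ke2, Ke3]
    push_cast
    linear_combination (-2 : ℂ) * H1 + e1
  · simp [Fin.sum_univ_six, show Kg 0 = Ke1 from rfl, show Kg 1 = Ke2 from rfl,
      show Kg 2 = Ke3 from rfl, show Kg 3 = Kalpha • Ke1 from rfl,
      show Kg 4 = Kalpha • Ke2 from rfl, show Kg 5 = Kalpha • Ke3 from rfl, Kvec3, Kvec4, Kvec5, Ke1, Ke2, Ke3]
    push_cast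
    linear_combination e2 + (-2*((m 2:ℤ):ℂ)) * Khbar + (-2*((m 5:ℤ):ℂ)) * Khprod
      + (-2*((m 3:ℤ):ℂ)) * Khsq

/-- The fixed locus in `J = ℂ³/Λ` of the antireflection
`ρ₂ : (z₁,z₂,z₃) ↦ (-z₁,-z₂,z₃)` is the union of exactly `4` translates
`κᵢ + E` of the elliptic curve `E = (V₁ + Λ)/Λ`, `V₁ = ℂ·(0,0,1)`: the four
translates are pairwise disjoint and their union is the whole fixed locus. -/
theorem fixed_locus_of_antireflection_rho2 :
    (∀ z : Fin 3 → ℂ,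
      (![-z 0, -z 1, z 2] - z ∈ LambdaZ) ↔
      (∃ i : Fin 4, ∃ w : ℂ, z - (kappas i + w • ![0,0,1]) ∈ LambdaZ)) ∧
    (∀ i j : Fin 4, i ≠ j →
      ¬ ∃ w : ℂ, kappas i - kappas j - w • ![0,0,1] ∈ LambdaZ) := by
  constructor
  · intro z
    constructor
    · intro h
      rw [mem_LambdaZ_iff] at h
      obtain ⟨n, hn⟩ := h
      have h0 := congrFun hn 0
      have h1 := congrFun hn 1
      have h2 := congrFun hn 2
      simp [Fin.sum_univ_six, show Kg 0 = Ke1 from rfl, show Kg 1 = Ke2 from rfl,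
        show Kg 2 = Ke3 from rfl, show Kg 3 = Kalpha • Ke1 from rfl,
        show Kg 4 = Kalpha • Ke2 from rfl, show Kg 5 = Kalpha • Ke3 from rfl, Kvec3, Kvec4, Kvec5,
        Ke1, Ke2, Ke3] at h0 h1 h2
      have key : ((2 * n 1 + n 2 - 2 * n 3 + 2 * n 5 : ℤ) : ℂ)
          + ((n 0 - n 2 + n 3 + 2 * n 4 : ℤ) : ℂ) * Kalpha = 0 := by
        push_cast
        linear_combination h2 - ((n 2:ℤ):ℂ) * Khbar - ((n 3:ℤ):ℂ) * Khsq
          - ((n 5:ℤ):ℂ) * Khprod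
      obtain ⟨hA, hB⟩ := Kindep2 _ _ key
      obtain ⟨q3, h3 | h3⟩ := Int.even_or_odd' (n 3)
      · obtain ⟨q5, h5 | h5⟩ := Int.even_or_odd' (n 5)
        · exact ⟨0, Kbuild z n q3 q5 0 0 h0 h1 hA hB (by omega) (by omega) 0
            (by funext j; fin_cases j <;> simp [kappas, Matrix.vecHead, Matrix.vecTail])⟩
        · exact ⟨2, Kbuild z n q3 q5 0 1 h0 h1 hA hB (by omega) (by omega) 2
            (by funext j; fin_cases j <;> simp [kappas, Matrix.vecHead, Matrix.vecTail])⟩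
      · obtain ⟨q5, h5 | h5⟩ := Int.even_or_odd' (n 5)
        · exact ⟨1, Kbuild z n q3 q5 1 0 h0 h1 hA hB (by omega) (by omega) 1
            (by funext j; fin_cases j <;> simp [kappas, Matrix.vecHead, Matrix.vecTail])⟩
        · exact ⟨3, Kbuild z n q3 q5 1 1 h0 h1 hA hB (by omega) (by omega) 3
            (by funext j; fin_cases j <;> simp [kappas, Matrix.vecHead, Matrix.vecTail])⟩
    · rintro ⟨i, w, hm⟩
      rw [mem_LambdaZ_iff] at hm
      obtain ⟨m, hmeq⟩ := hm
      have H0 := congrFun hmeq 0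
      have H1 := congrFun hmeq 1
      fin_cases i <;>
        simp [Fin.sum_univ_six, show Kg 0 = Ke1 from rfl, show Kg 1 = Ke2 from rfl,
          show Kg 2 = Ke3 from rfl, show Kg 3 = Kalpha • Ke1 from rfl,
          show Kg 4 = Kalpha • Ke2 from rfl, show Kg 5 = Kalpha • Ke3 from rfl, Kvec3, Kvec4, Kvec5,
          Ke1, Ke2, Ke3, kappas, Matrix.vecHead, Matrix.vecTail] at H0 H1
      · exact Kconv z m ![0,0,0,0,0,0] 0 0 (by push_cast; linear_combination H0)
          (by push_cast; linear_combination H1)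
          (by simp only [Kvec0,Kvec1,Kvec2,Kvec3,Kvec4,Kvec5]; push_cast; ring) (by simp only [Kvec0,Kvec1,Kvec2,Kvec3,Kvec4,Kvec5]; push_cast; ring) (by simp only [Kvec0,Kvec1,Kvec2,Kvec3,Kvec4,Kvec5]; push_cast; ring)
      · exact Kconv z m ![1,0,-2,-1,-1,0] 1 0 (by push_cast; linear_combination H0)
          (by push_cast; linear_combination H1)
          (by simp only [Kvec0,Kvec1,Kvec2,Kvec3,Kvec4,Kvec5]; push_cast; ring) (by simp only [Kvec0,Kvec1,Kvec2,Kvec3,Kvec4,Kvec5]; push_cast; linear_combination -Khsq)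
          (by simp only [Kvec0,Kvec1,Kvec2,Kvec3,Kvec4,Kvec5]; push_cast; linear_combination (-2:ℂ) * Khbar - Khsq)
      · exact Kconv z m ![0,1,0,0,0,-1] (Kalpha/2) (Kalpha/2)
          (by push_cast; linear_combination H0) (by push_cast; linear_combination H1)
          (by simp only [Kvec0,Kvec1,Kvec2,Kvec3,Kvec4,Kvec5]; push_cast; ring) (by simp only [Kvec0,Kvec1,Kvec2,Kvec3,Kvec4,Kvec5]; push_cast; ring)
          (by simp only [Kvec0,Kvec1,Kvec2,Kvec3,Kvec4,Kvec5]; push_cast; linear_combination -Khprod)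
      · exact Kconv z m ![1,1,-2,-1,-1,-1] (1 + Kalpha/2) (Kalpha/2)
          (by push_cast; linear_combination H0) (by push_cast; linear_combination H1)
          (by simp only [Kvec0,Kvec1,Kvec2,Kvec3,Kvec4,Kvec5]; push_cast; ring) (by simp only [Kvec0,Kvec1,Kvec2,Kvec3,Kvec4,Kvec5]; push_cast; linear_combination -Khsq)
          (by simp only [Kvec0,Kvec1,Kvec2,Kvec3,Kvec4,Kvec5]; push_cast; linear_combination (-2:ℂ) * Khbar - Khsq - Khprod)
  · intro i j hij hex
    obtain ⟨w, hw⟩ := hex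
    rw [mem_LambdaZ_iff] at hw
    obtain ⟨n, hn⟩ := hw
    have H0 := congrFun hn 0
    have H1 := congrFun hn 1
    fin_cases i <;> fin_cases j <;>
      simp [Fin.sum_univ_six, show Kg 0 = Ke1 from rfl, show Kg 1 = Ke2 from rfl,
        show Kg 2 = Ke3 from rfl, show Kg 3 = Kalpha • Ke1 from rfl,
        show Kg 4 = Kalpha • Ke2 from rfl, show Kg 5 = Kalpha • Ke3 from rfl, Kvec3, Kvec4, Kvec5,
        Ke1, Ke2, Ke3, kappas, Matrix.vecHead, Matrix.vecTail] at H0 H1 hij ⊢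
    -- 12 off-diagonal cases, in lexicographic order
    · obtain ⟨p1, -⟩ := Kindep2 (n 2 + 1) (n 5) (by push_cast; linear_combination H0)
      obtain ⟨p2, -⟩ := Kindep2 (n 2 - 2 * n 3) (n 0 + n 3 + n 5)
        (by push_cast; linear_combination H1 - ((n 3:ℤ):ℂ) * Khsq)
      omega
    · exact absurd (Kindep2 (2 * n 2) (2 * n 5 + 1)
        (by push_cast; linear_combination (2:ℂ) * H0)).2 (by omega)
    · exact absurd (Kindep2 (2 * n 2 + 2) (2 * n 5 + 1)
        (by push_cast; linear_combination (2:ℂ) * H0)).2 (by omega)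
    · obtain ⟨p1, -⟩ := Kindep2 (n 2 - 1) (n 5) (by push_cast; linear_combination H0)
      obtain ⟨p2, -⟩ := Kindep2 (n 2 - 2 * n 3) (n 0 + n 3 + n 5)
        (by push_cast; linear_combination H1 - ((n 3:ℤ):ℂ) * Khsq)
      omega
    · exact absurd (Kindep2 (2 * n 2 - 2) (2 * n 5 + 1)
        (by push_cast; linear_combination (2:ℂ) * H0)).2 (by omega)
    · exact absurd (Kindep2 (2 * n 2) (2 * n 5 + 1)
        (by push_cast; linear_combination (2:ℂ) * H0)).2 (by omega)
    · exact absurd (Kindep2 (2 * n 2) (2 * n 5 - 1)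
        (by push_cast; linear_combination (2:ℂ) * H0)).2 (by omega)
    · exact absurd (Kindep2 (2 * n 2 + 2) (2 * n 5 - 1)
        (by push_cast; linear_combination (2:ℂ) * H0)).2 (by omega)
    · obtain ⟨p1, -⟩ := Kindep2 (n 2 + 1) (n 5) (by push_cast; linear_combination H0)
      obtain ⟨p2, -⟩ := Kindep2 (n 2 - 2 * n 3) (n 0 + n 3 + n 5)
        (by push_cast; linear_combination H1 - ((n 3:ℤ):ℂ) * Khsq)
      omega
    · exact absurd (Kindep2 (2 * n 2 - 2) (2 * n 5 - 1)
        (by push_cast; linear_combination (2:ℂ) * H0)).2 (by omega)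
    · exact absurd (Kindep2 (2 * n 2) (2 * n 5 - 1)
        (by push_cast; linear_combination (2:ℂ) * H0)).2 (by omega)
    · obtain ⟨p1, -⟩ := Kindep2 (n 2 - 1) (n 5) (by push_cast; linear_combination H0)
      obtain ⟨p2, -⟩ := Kindep2 (n 2 - 2 * n 3) (n 0 + n 3 + n 5)
        (by push_cast; linear_combination H1 - ((n 3:ℤ):ℂ) * Khsq)
      omega

end
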